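/- arXiv:2604.02806 — 3 statements merged into one kernel-verified Lean document; each statement's English description precedes it below -/
import Mathlib

section
/- Let f_1, ..., f_m : ℝ^n → ℝ, X ⊆ ℝ^n, and strictly positive weights w_1, ..., w_m summing to 1. If x* ∈ X minimizes ∑ᵢ wᵢ fᵢ(x) over X, then x* is properly Pareto-efficient: there exists a constant R > 0 such that for every i and every x ∈ X with fᵢ(x) < fᵢ(x*), there is an index j with fⱼ(x) > fⱼ(x*) and (fᵢ(x*) − fᵢ(x)) / (fⱼ(x) − fⱼ(x*)) ≤ R. -/
theorem weighted_sum_minimizer_is_properly_pareto_efficient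
    {n m : ℕ} (f : Fin m → (Fin n → ℝ) → ℝ) (X : Set (Fin n → ℝ))
    (w : Fin m → ℝ) (hw : ∀ i, 0 < w i) (hsum : ∑ i, w i = 1)
    (xstar : Fin n → ℝ) (hx : xstar ∈ X)
    (hmin : ∀ x ∈ X, ∑ i, w i * f i xstar ≤ ∑ i, w i * f i x) :
    ∃ R > (0 : ℝ), ∀ i, ∀ x ∈ X, f i x < f i xstar →
      ∃ j, f j xstar < f j x ∧
        (f i xstar - f i x) / (f j x - f j xstar) ≤ R := by
  rcases Nat.eq_zero_or_pos m with hm | hm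
  · subst hm
    exact ⟨1, one_pos, fun i => i.elim0⟩
  haveI : Nonempty (Fin m) := ⟨⟨0, hm⟩⟩
  set ε : ℝ := Finset.univ.inf' Finset.univ_nonempty w with hε
  have hεle : ∀ i, ε ≤ w i := fun i => Finset.inf'_le _ (Finset.mem_univ i)
  obtain ⟨i0, _, hi0⟩ := Finset.exists_mem_eq_inf' Finset.univ_nonempty w
  have hεpos : 0 < ε := by rw [hε, hi0]; exact hw i0
  refine ⟨m / ε, div_pos (by exact_mod_cast hm) hεpos, ?_⟩
  intro i x hxX hfi
  set g : Fin m → ℝ := fun j => w j * (f j x - f j xstar) with hg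
  have hsum0 : 0 ≤ ∑ j, g j := by
    have := hmin x hxX
    simp only [hg, mul_sub, Finset.sum_sub_distrib]
    linarith
  obtain ⟨j, _, hjmax⟩ := Finset.exists_max_image Finset.univ g ⟨i, Finset.mem_univ i⟩
  have herase : ∑ k ∈ Finset.univ.erase i, g k + g i = ∑ k, g k :=
    Finset.sum_erase_add _ _ (Finset.mem_univ i)
  have hgi : g i < 0 := mul_neg_of_pos_of_neg (hw i) (by linarith)
  have hcard : (Finset.univ.erase i).card = m - 1 := by
    simp [Finset.card_erase_of_mem]
  have hbound : ∑ k ∈ Finset.univ.erase i, g k ≤ (m - 1 : ℕ) * g j := by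
    have := Finset.sum_le_card_nsmul (Finset.univ.erase i) g (g j)
      (fun k _ => hjmax k (Finset.mem_univ k))
    rw [hcard, nsmul_eq_mul] at this
    exact this
  have hmgj : -g i ≤ (m - 1 : ℕ) * g j := by linarith
  have hgjpos : 0 < g j := by
    by_contra h
    push_neg at h
    have : ((m - 1 : ℕ) : ℝ) * g j ≤ 0 :=
      mul_nonpos_of_nonneg_of_nonpos (Nat.cast_nonneg _) h
    linarith
  have hDpos : 0 < f j x - f j xstar := by
    by_contra h
    push_neg at h
    exact absurd hgjpos (not_lt.mpr (mul_nonpos_of_nonneg_of_nonpos (hw j).le h))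
  refine ⟨j, by linarith, ?_⟩
  have hwj1 : w j ≤ 1 := by
    have := Finset.single_le_sum (f := w) (fun k _ => (hw k).le) (Finset.mem_univ j)
    linarith [hsum ▸ this]
  have hm1 : ((m - 1 : ℕ) : ℝ) ≤ m := by
    exact_mod_cast Nat.cast_le.mpr (Nat.sub_le m 1)
  rw [div_le_div_iff₀ hDpos hεpos]
  have key : w i * (f i xstar - f i x) ≤ (m : ℝ) * (f j x - f j xstar) := by
    have h1 : -g i = w i * (f i xstar - f i x) := by simp only [hg]; ring
    have h2 : ((m - 1 : ℕ) : ℝ) * g j ≤ (m : ℝ) * (f j x - f j xstar) := by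
      have hgjD : g j ≤ f j x - f j xstar := by
        have := mul_le_mul_of_nonneg_right hwj1 hDpos.le
        simpa [hg] using this
      calc ((m - 1 : ℕ) : ℝ) * g j ≤ ((m - 1 : ℕ) : ℝ) * (f j x - f j xstar) :=
            mul_le_mul_of_nonneg_left hgjD (Nat.cast_nonneg _)
        _ ≤ (m : ℝ) * (f j x - f j xstar) :=
            mul_le_mul_of_nonneg_right hm1 hDpos.le
    linarith [h1 ▸ hmgj]
  nlinarith [hεle i, hw i]
end

section
/- For the bi-objective problem minimizing f_1(x) = −x_1³ − x_2³ and f_2(x) = x_1² − x_2² subject to g(x) = x_1² + (x_2+1)² − 1 = 0, every feasible x ∈ ℝ² with (s_1, s_2) = (f_1(x), f_2(x)) satisfies the degree-six eliminant relation s_2⁶ − 12s_2⁵ − 12s_1s_2⁴ + 16s_1⁴ + 48s_1³s_2 + 48s_1²s_2² + 32s_1s_2³ + 48s_2⁴ − 32s_1³ − 48s_1²s_2 = 0. -/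
theorem biobjective_circle_eliminant_relation
    (x₁ x₂ s₁ s₂ : ℝ)
    (hg : x₁^2 + (x₂ + 1)^2 - 1 = 0)
    (h₁ : s₁ = -x₁^3 - x₂^3) (h₂ : s₂ = x₁^2 - x₂^2) :
    s₂^6 - 12*s₂^5 - 12*s₁*s₂^4 + 16*s₁^4 + 48*s₁^3*s₂ + 48*s₁^2*s₂^2 +
      32*s₁*s₂^3 + 48*s₂^4 - 32*s₁^3 - 48*s₁^2*s₂ = 0 := by
  subst h₁ h₂
  linear_combination (48*x₂^7 + 8*x₂^8 + 26*x₂^9 + 17*x₂^10 - 120*x₁^2*x₂^5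
    - 12*x₁^2*x₂^6 - 76*x₁^2*x₂^7 - 23*x₁^2*x₂^8 + 48*x₁^3*x₂^4 + 40*x₁^3*x₂^5
    + 28*x₁^3*x₂^6 + 64*x₁^3*x₂^7 + 144*x₁^4*x₂^3 + 36*x₁^4*x₂^4 + 72*x₁^4*x₂^5
    + 38*x₁^4*x₂^6 - 48*x₁^5*x₂^2 - 48*x₁^5*x₂^3 - 92*x₁^5*x₂^4 - 64*x₁^5*x₂^5
    - 72*x₁^6*x₂ - 4*x₁^6*x₂^2 - 52*x₁^6*x₂^3 + 38*x₁^6*x₂^4 + 72*x₁^7*x₂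
    + 36*x₁^7*x₂^2 + 64*x₁^7*x₂^3 + 36*x₁^8 - 34*x₁^8*x₂ - 23*x₁^8*x₂^2
    - 36*x₁^9 + 17*x₁^10) * hg
end

section
/- For a fixed unit vector a ∈ ℝⁿ with r = aᵀy ≠ 0, the Pareto front of the bi-objective problem min over ŷ ∈ ℝⁿ of (‖y − ŷ‖², (aᵀŷ)²) is exactly the curve { (s_1, s_2) : √s_1 + √s_2 = |r|, s_1 ≥ 0, s_2 ≥ 0 }. -/
open scoped RealInnerProductSpace

lemma key_ineq {n : ℕ} (y a z : EuclideanSpace ℝ (Fin n)) (ha : ‖a‖ = 1) :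
    |⟪a, y⟫| ≤ ‖y - z‖ + |⟪a, z⟫| := by
  have h1 : ⟪a, y⟫ = ⟪a, y - z⟫ + ⟪a, z⟫ := by rw [inner_sub_right]; ring
  have h2 : |⟪a, y - z⟫| ≤ ‖a‖ * ‖y - z‖ := abs_real_inner_le_norm a (y - z)
  rw [ha, one_mul] at h2
  calc |⟪a, y⟫| ≤ |⟪a, y - z⟫| + |⟪a, z⟫| := by rw [h1]; exact abs_add_le _ _
    _ ≤ ‖y - z‖ + |⟪a, z⟫| := by linarith

lemma pt_calc {n : ℕ} (y a : EuclideanSpace ℝ (Fin n)) (ha : ‖a‖ = 1) (c : ℝ) :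
    ‖y - (y - c • a)‖ = |c| ∧ ⟪a, y - c • a⟫ = ⟪a, y⟫ - c := by
  constructor
  · have : y - (y - c • a) = c • a := by abel
    rw [this, norm_smul, ha, mul_one]; simp
  · rw [inner_sub_right, real_inner_smul_right, real_inner_self_eq_norm_sq, ha]
    ring

theorem misfit_latency_pareto_front_characterization
    {n : ℕ} (y a : EuclideanSpace ℝ (Fin n)) (ha : ‖a‖ = 1)
    (r : ℝ) (hr : r = ⟪a, y⟫) (hr0 : r ≠ 0) :
    {s : ℝ × ℝ | ∃ yh : EuclideanSpace ℝ (Fin n),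
        (¬ ∃ z : EuclideanSpace ℝ (Fin n),
          (‖y - z‖^2 ≤ ‖y - yh‖^2 ∧ ⟪a, z⟫^2 ≤ ⟪a, yh⟫^2) ∧
          (‖y - z‖^2 < ‖y - yh‖^2 ∨ ⟪a, z⟫^2 < ⟪a, yh⟫^2)) ∧
        s = (‖y - yh‖^2, ⟪a, yh⟫^2)} =
      {s : ℝ × ℝ | Real.sqrt s.1 + Real.sqrt s.2 = |r| ∧ 0 ≤ s.1 ∧ 0 ≤ s.2} := by
  have hrpos : (0:ℝ) < |r| := abs_pos.mpr hr0
  ext s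
  simp only [Set.mem_setOf_eq]
  constructor
  · rintro ⟨yh, hpar, rfl⟩
    set f : ℝ := ‖y - yh‖ with hf
    set g : ℝ := |⟪a, yh⟫| with hg
    have hf0 : 0 ≤ f := norm_nonneg _
    have hg0 : 0 ≤ g := abs_nonneg _
    have hsq1 : Real.sqrt (f^2) = f := Real.sqrt_sq hf0
    have hsq2 : Real.sqrt (⟪a, yh⟫^2) = g := Real.sqrt_sq_eq_abs _
    have hkey : |r| ≤ f + g := by rw [hr]; exact key_ineq y a yh ha
    have heq : f + g = |r| := by
      by_contra hne
      have hgt : |r| < f + g := lt_of_le_of_ne hkey (Ne.symm hne)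
      apply hpar
      set t : ℝ := min f |r| with ht
      have ht0 : 0 ≤ t := le_min hf0 hrpos.le
      refine ⟨y - (t * r / |r|) • a, ?_⟩
      obtain ⟨hn, hi⟩ := pt_calc y a ha (t * r / |r|)
      have hcabs : abs (t * r / |r|) = t := by
        rw [abs_div, abs_mul, abs_abs, abs_of_nonneg ht0,
          mul_div_assoc, div_self (abs_ne_zero.mpr hr0), mul_one]
      rw [hcabs] at hn
      have hisq : ⟪a, y - (t * r / |r|) • a⟫^2 = (|r| - t)^2 := by
        rw [hi, ← hr]
        have : r - t * r / |r| = r * (|r| - t) / |r| := by field_simp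
        rw [this]
        rw [div_pow, mul_pow, sq_abs]
        field_simp
      rw [hn, hisq]
      have hgsq : g^2 = ⟪a, yh⟫^2 := sq_abs _
      rcases lt_or_ge f |r| with hc | hc
      · have htf : t = f := min_eq_left hc.le
        have hlt : |r| - t < g := by rw [htf]; linarith
        refine ⟨⟨by rw [htf], ?_⟩, Or.inr ?_⟩
        · rw [← hgsq]
          exact pow_le_pow_left₀ (by rw [htf]; linarith) hlt.le 2
        · rw [← hgsq]
          exact pow_lt_pow_left₀ hlt (by rw [htf]; linarith) (by norm_num)
      · have htr : t = |r| := min_eq_right hc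
        have h1 : t^2 ≤ f^2 := by
          rw [htr]; exact pow_le_pow_left₀ hrpos.le hc 2
        refine ⟨⟨h1, ?_⟩, ?_⟩
        · rw [htr]; simp [hgsq.symm ▸ sq_nonneg g, ← hgsq]
          positivity
        · rcases lt_or_eq_of_le hc with hc' | hc'
          · exact Or.inl (by rw [htr]; exact pow_lt_pow_left₀ hc' hrpos.le (by norm_num))
          · have hgpos : 0 < g := by linarith
            refine Or.inr ?_
            rw [htr, ← hgsq]
            simpa using pow_pos hgpos 2
    refine ⟨?_, sq_nonneg _, sq_nonneg _⟩
    show Real.sqrt (f^2) + Real.sqrt (⟪a, yh⟫^2) = |r|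
    rw [hsq1, hsq2]; exact heq
  · rintro ⟨hsum, h1, h2⟩
    set c : ℝ := Real.sqrt s.1 * r / |r| with hc
    refine ⟨y - c • a, ?_, ?_⟩
    · obtain ⟨hn, hi⟩ := pt_calc y a ha c
      have hcabs : abs c = Real.sqrt s.1 := by
        rw [hc, abs_div, abs_mul, abs_abs, abs_of_nonneg (Real.sqrt_nonneg _),
          mul_div_assoc, div_self (abs_ne_zero.mpr hr0), mul_one]
      have hnorm : ‖y - (y - c • a)‖^2 = s.1 := by
        rw [hn, hcabs, Real.sq_sqrt h1]
      have hisq : ⟪a, y - c • a⟫^2 = s.2 := by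
        rw [hi, ← hr, hc]
        have h3 : r - Real.sqrt s.1 * r / |r| = r * (|r| - Real.sqrt s.1) / |r| := by
          field_simp
        have h4 : |r| - Real.sqrt s.1 = Real.sqrt s.2 := by linarith
        rw [h3, h4, div_pow, mul_pow, sq_abs]
        field_simp [Real.sq_sqrt h2]; exact Real.sq_sqrt h2
      rintro ⟨z, ⟨hz1, hz2⟩, hz3⟩
      rw [hnorm] at hz1
      rw [hisq] at hz2
      have hle1 : ‖y - z‖ ≤ Real.sqrt s.1 := by
        have := Real.sqrt_le_sqrt hz1
        rwa [Real.sqrt_sq (norm_nonneg _)] at this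
      have hle2 : |⟪a, z⟫| ≤ Real.sqrt s.2 := by
        have := Real.sqrt_le_sqrt hz2
        rwa [Real.sqrt_sq_eq_abs] at this
      have hkey : |r| ≤ ‖y - z‖ + |⟪a, z⟫| := by rw [hr]; exact key_ineq y a z ha
      have he1 : ‖y - z‖ = Real.sqrt s.1 := by linarith
      have he2 : |⟪a, z⟫| = Real.sqrt s.2 := by linarith
      have hq1 : ‖y - z‖^2 = s.1 := by rw [he1, Real.sq_sqrt h1]
      have hq2 : ⟪a, z⟫^2 = s.2 := by rw [← sq_abs, he2, Real.sq_sqrt h2]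
      rw [hnorm, hq1] at hz3
      rw [hisq, hq2] at hz3
      rcases hz3 with h | h <;> exact lt_irrefl _ h
    · obtain ⟨hn, hi⟩ := pt_calc y a ha c
      have hcabs : abs c = Real.sqrt s.1 := by
        rw [hc, abs_div, abs_mul, abs_abs, abs_of_nonneg (Real.sqrt_nonneg _),
          mul_div_assoc, div_self (abs_ne_zero.mpr hr0), mul_one]
      have hnorm : ‖y - (y - c • a)‖^2 = s.1 := by rw [hn, hcabs, Real.sq_sqrt h1]
      have hisq : ⟪a, y - c • a⟫^2 = s.2 := by
        rw [hi, ← hr, hc]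
        have h3 : r - Real.sqrt s.1 * r / |r| = r * (|r| - Real.sqrt s.1) / |r| := by
          field_simp
        have h4 : |r| - Real.sqrt s.1 = Real.sqrt s.2 := by linarith
        rw [h3, h4, div_pow, mul_pow, sq_abs]
        field_simp [Real.sq_sqrt h2]; exact Real.sq_sqrt h2
      rw [hnorm, hisq]
end
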